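/- In Example 1 (single consumer with benefit B(d) = b·d on [0, d_max]; single producer with cost C(u,g) = a·g + w·u on {(u,g) : u ∈ {0,1}, 0 ≤ g ≤ u·g_max}; parameters a ≥ 0, w > 0, a + w/g_max < b, b·d_max < a·d_max + w), the unique primal optimum is u* = g* = d* = 0, and the convex hull price is p⁺ = a + w/g_max with total uplift (b − p⁺)·d_max > 0 paid to the consumer. -/
import Mathlib


/-- Example 1: with benefit `B d = b·d` on `[0, d_max]`, cost `C(u,g) = a·g + w·u`,
and parameters `a ≥ 0`, `w > 0`, `a + w/g_max < b`, `b·d_max < a·d_max + w`, the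
unique primal optimum is `u* = g* = d* = 0`, the convex hull price is the unique dual
minimizer `p⁺ = a + w/g_max`, the producer uplift is zero, and the consumer uplift
(the total uplift) is `(b − p⁺)·d_max > 0`. -/
theorem stmt10 (a w b gmax dmax : ℝ)
    (ha : 0 ≤ a) (hw : 0 < w) (hgmax : 0 < gmax) (hdmax : 0 < dmax)
    (h1 : a + w / gmax < b) (h2 : b * dmax < a * dmax + w)
    (F : Set (ℝ × ℝ × ℝ))
    (hF : F = {x | (x.1 = 0 ∨ x.1 = 1) ∧ 0 ≤ x.2.1 ∧ x.2.1 ≤ x.1 * gmax ∧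
        0 ≤ x.2.2 ∧ x.2.2 ≤ dmax ∧ x.2.1 = x.2.2})
    (obj : ℝ × ℝ × ℝ → ℝ) (hobj : obj = fun x => b * x.2.2 - a * x.2.1 - w * x.1)
    (cons prod : ℝ → ℝ)
    (hcons : ∀ p, IsGreatest {v | ∃ d ∈ Set.Icc (0:ℝ) dmax, v = b * d - p * d} (cons p))
    (hprod : ∀ p, IsGreatest {v | ∃ x : ℝ × ℝ,
        ((x.1 = 0 ∨ x.1 = 1) ∧ 0 ≤ x.2 ∧ x.2 ≤ x.1 * gmax) ∧
        v = p * x.2 - a * x.2 - w * x.1} (prod p)) :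
    ((0, 0, 0) ∈ F ∧ (∀ x ∈ F, obj x ≤ obj (0, 0, 0)) ∧
      (∀ x ∈ F, obj x = obj (0, 0, 0) → x = (0, 0, 0))) ∧
    (∀ p, cons (a + w / gmax) + prod (a + w / gmax) ≤ cons p + prod p) ∧
    (∀ p, cons p + prod p = cons (a + w / gmax) + prod (a + w / gmax) →
      p = a + w / gmax) ∧
    cons (a + w / gmax) = (b - (a + w / gmax)) * dmax ∧
    prod (a + w / gmax) = 0 ∧
    0 < (b - (a + w / gmax)) * dmax := by
  have hgne : gmax ≠ 0 := ne_of_gt hgmax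
  have hwg : (w / gmax) * gmax = w := div_mul_cancel₀ w hgne
  have hwgpos : 0 < w / gmax := div_pos hw hgmax
  have hba : a < b := by nlinarith
  set p0 := a + w / gmax with hp0
  have hbp0 : p0 < b := h1
  have hdg : dmax < gmax := by
    have h3 : p0 * dmax < a * dmax + w := by nlinarith
    rw [hp0] at h3
    nlinarith
  -- closed form for cons
  have hconsval : ∀ p, cons p = max 0 ((b - p) * dmax) := by
    intro p
    refine ((hcons p).unique ⟨?_, ?_⟩)
    · rcases le_total (b - p) 0 with h | h
      · refine ⟨0, ⟨le_rfl, hdmax.le⟩, ?_⟩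
        have : (b - p) * dmax ≤ 0 := mul_nonpos_of_nonpos_of_nonneg h hdmax.le
        rw [max_eq_left this]; ring
      · refine ⟨dmax, ⟨hdmax.le, le_rfl⟩, ?_⟩
        have : 0 ≤ (b - p) * dmax := mul_nonneg h hdmax.le
        rw [max_eq_right this]; ring
    · rintro v ⟨d, ⟨hd0, hd1⟩, rfl⟩
      rcases le_total (b - p) 0 with h | h
      · have : b * d - p * d ≤ 0 := by nlinarith
        exact this.trans (le_max_left _ _)
      · have : b * d - p * d ≤ (b - p) * dmax := by nlinarith
        exact this.trans (le_max_right _ _)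
  -- closed form for prod
  have hprodval : ∀ p, prod p = max 0 ((p - a) * gmax - w) := by
    intro p
    refine ((hprod p).unique ⟨?_, ?_⟩)
    · rcases le_total ((p - a) * gmax - w) 0 with h | h
      · refine ⟨(0, 0), ⟨Or.inl rfl, le_rfl, by simp⟩, ?_⟩
        rw [max_eq_left h]; ring
      · refine ⟨(1, gmax), ⟨Or.inr rfl, hgmax.le, by simp⟩, ?_⟩
        rw [max_eq_right h]; ring
    · rintro v ⟨⟨u, g⟩, ⟨hu, hg0, hg1⟩, rfl⟩
      rcases hu with rfl | rfl
      · simp only at hg1 ⊢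
        have hg : g = 0 := le_antisymm (by simpa using hg1) hg0
        subst hg
        simp
      · simp only [one_mul] at hg1 ⊢
        rcases le_total (p - a) 0 with h | h
        · have : p * g - a * g - w * 1 ≤ 0 := by nlinarith
          exact this.trans (le_max_left _ _)
        · have : p * g - a * g - w * 1 ≤ (p - a) * gmax - w := by nlinarith
          exact this.trans (le_max_right _ _)
  have hconsp0 : cons p0 = (b - p0) * dmax := by
    rw [hconsval]
    exact max_eq_right (by nlinarith)
  have hprodp0 : prod p0 = 0 := by
    rw [hprodval]
    have : (p0 - a) * gmax - w = 0 := by rw [hp0, add_sub_cancel_left, hwg, sub_self]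
    rw [this, max_self]
  refine ⟨⟨?_, ?_, ?_⟩, ?_, ?_, hconsp0, hprodp0, mul_pos (by linarith) hdmax⟩
  · subst hF; constructor
    · exact Or.inl rfl
    · refine ⟨le_rfl, by simp, le_rfl, hdmax.le, rfl⟩
  · rintro ⟨u, g, d⟩ hx
    subst hF hobj
    obtain ⟨hu, hg0, hg1, hd0, hd1, hgd⟩ := hx
    simp only at hu hg0 hg1 hd0 hd1 hgd ⊢
    subst hgd
    rcases hu with rfl | rfl
    · have : g = 0 := le_antisymm (by simpa using hg1) hg0
      subst this; simp
    · have : (b - a) * (dmax - g) ≥ 0 := mul_nonneg (by linarith) (by linarith)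
      nlinarith
  · rintro ⟨u, g, d⟩ hx heq
    subst hF hobj
    obtain ⟨hu, hg0, hg1, hd0, hd1, hgd⟩ := hx
    simp only at hu hg0 hg1 hd0 hd1 hgd heq
    subst hgd
    rcases hu with rfl | rfl
    · have : g = 0 := le_antisymm (by simpa using hg1) hg0
      subst this; rfl
    · exfalso
      have : (b - a) * (dmax - g) ≥ 0 := mul_nonneg (by linarith) (by linarith)
      nlinarith
  · intro p
    rw [hconsp0, hprodp0, hconsval, hprodval]
    have m1 := le_max_left (0:ℝ) ((b - p) * dmax)
    have m2 := le_max_right (0:ℝ) ((b - p) * dmax)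
    have m3 := le_max_left (0:ℝ) ((p - a) * gmax - w)
    have m4 := le_max_right (0:ℝ) ((p - a) * gmax - w)
    rcases le_total p p0 with h | h
    · have : (b - p0) * dmax ≤ (b - p) * dmax :=
        mul_le_mul_of_nonneg_right (by linarith) hdmax.le
      linarith
    · have hp0a : (p0 - a) * gmax = w := by rw [hp0, add_sub_cancel_left]; exact hwg
      have key : 0 ≤ (p - p0) * (gmax - dmax) := mul_nonneg (by linarith) (by linarith)
      have key2 : (p - p0) * dmax ≤ (p - p0) * gmax := by nlinarith [key]
      have key3 : (p - a) * gmax - w = (p - p0) * gmax := by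
        rw [← hp0a]; ring
      linarith
  · intro p heq
    rw [hconsp0, hprodp0, hconsval, hprodval] at heq
    have m2 := le_max_right (0:ℝ) ((b - p) * dmax)
    have m3 := le_max_left (0:ℝ) ((p - a) * gmax - w)
    have m4 := le_max_right (0:ℝ) ((p - a) * gmax - w)
    have m1 := le_max_left (0:ℝ) ((b - p) * dmax)
    by_contra hne
    rcases lt_or_gt_of_ne hne with h | h
    · have : (b - p0) * dmax < (b - p) * dmax :=
        mul_lt_mul_of_pos_right (by linarith) hdmax
      linarith
    · have hp0a : (p0 - a) * gmax = w := by rw [hp0, add_sub_cancel_left]; exact hwg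
      have key : 0 < (p - p0) * (gmax - dmax) := mul_pos (by linarith) (by linarith)
      have key2 : (p - p0) * dmax < (p - p0) * gmax := by nlinarith [key]
      have key3 : (p - a) * gmax - w = (p - p0) * gmax := by
        rw [← hp0a]; ring
      linarith
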